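/- Let X be a compact metric space, Γ a monoid acting minimally on X by continuous maps, H a real separable Hilbert space, and (Ψ, ρ) a continuous cocycle of affine isometries of H over this action. Let φ : X → H be weakly continuous (continuous when H is given its weak topology) and skew-invariant: φ(f·x) = Ψ(f,x)(φ(x)) + ρ(f,x) for all f ∈ Γ and x ∈ X. Then φ is strongly continuous, i.e., continuous when H carries its norm topology. -/

import Mathlib

/-- Every weakly-continuous skew-invariant section of a continuous cocycle of affine isometries
of a real separable Hilbert space over a minimal dynamics is strongly (norm) continuous. -/
theorem weakly_continuous_invariant_section_is_strongly_continuous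
    {X : Type*} [MetricSpace X] [CompactSpace X]
    {Γ : Type*} [Monoid Γ]
    {H : Type*} [NormedAddCommGroup H] [InnerProductSpace ℝ H] [CompleteSpace H]
    [TopologicalSpace.SeparableSpace H]
    (act : Γ → X → X)
    (hact_one : ∀ x, act 1 x = x)
    (hact_mul : ∀ f g x, act (f * g) x = act f (act g x))
    (hact_cont : ∀ f, Continuous (act f))
    (hmin : ∀ x, Dense (Set.range fun f => act f x))
    (Ψ : Γ → X → (H ≃ₗᵢ[ℝ] H)) (ρ : Γ → X → H)
    (hΨ_cont : ∀ f, Continuous fun x =>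
      ((Ψ f x).toLinearIsometry.toContinuousLinearMap : H →L[ℝ] H))
    (hρ_cont : ∀ f, Continuous fun x => ρ f x)
    (hΨ_coc : ∀ f g x v, Ψ (f * g) x v = Ψ f (act g x) (Ψ g x v))
    (hρ_coc : ∀ f g x, ρ (f * g) x = ρ f (act g x) + Ψ f (act g x) (ρ g x))
    (φ : X → H)
    (hφ_weak : ∀ v : H, Continuous fun x => (inner ℝ (φ x) v : ℝ))
    (hφ_inv : ∀ f x, φ (act f x) = Ψ f x (φ x) + ρ f x) :
    Continuous φ := by
  rcases isEmpty_or_nonempty X with hE | hX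
  · rw [continuous_iff_continuousAt]; exact fun x => isEmptyElim x
  -- Step 1: φ is bounded, by Banach–Steinhaus
  obtain ⟨C, hC⟩ : ∃ C : ℝ, ∀ x, ‖φ x‖ ≤ C := by
    have hpt : ∀ v : H, ∃ C, ∀ x : X, ‖(innerSL ℝ (φ x)) v‖ ≤ C := by
      intro v
      obtain ⟨C, hC⟩ := (isCompact_range ((hφ_weak v).norm)).bddAbove
      exact ⟨C, fun x => hC (Set.mem_range_self x)⟩
    obtain ⟨C, hC⟩ := banach_steinhaus hpt
    exact ⟨C, fun x => by simpa [innerSL_apply_norm] using hC x⟩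
  have hC0 : 0 ≤ C := le_trans (norm_nonneg _) (hC Classical.ofNonempty)
  -- Step 2: the norm of φ is lower semicontinuous
  have hlsc : ∀ x : X, ∀ b < ‖φ x‖, ∀ᶠ y in nhds x, b < ‖φ y‖ := by
    intro x b hb
    rcases lt_or_ge b 0 with hb0 | hb0
    · exact Filter.Eventually.of_forall fun y => lt_of_lt_of_le hb0 (norm_nonneg _)
    · have hx0 : 0 < ‖φ x‖ := lt_of_le_of_lt hb0 hb
      have h1 : ∀ᶠ y in nhds x, b * ‖φ x‖ < (inner ℝ (φ y) (φ x) : ℝ) := by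
        apply continuousAt_const.eventually_lt (hφ_weak (φ x)).continuousAt
        have : (inner ℝ (φ x) (φ x) : ℝ) = ‖φ x‖ ^ 2 := real_inner_self_eq_norm_sq _
        rw [this, sq]
        exact mul_lt_mul_of_pos_right hb hx0
      filter_upwards [h1] with y hy
      have h2 : (inner ℝ (φ y) (φ x) : ℝ) ≤ ‖φ y‖ * ‖φ x‖ := real_inner_le_norm _ _
      have := lt_of_lt_of_le hy h2
      exact lt_of_mul_lt_mul_right this hx0.le
  -- sublevel sets are closed
  have hclosed : ∀ q : ℚ, IsClosed {x : X | ‖φ x‖ ≤ (q : ℝ)} := by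
    intro q
    rw [← isOpen_compl_iff, isOpen_iff_mem_nhds]
    intro x hx
    have hx' : (q : ℝ) < ‖φ x‖ := not_le.mp hx
    filter_upwards [hlsc x q hx'] with y hy
    exact not_le.mpr hy
  -- Step 3: by Baire, find a continuity point of ‖φ ·‖
  obtain ⟨x₀, hx₀⟩ : ∃ x₀, x₀ ∈ ⋂ q : ℚ, (frontier {x : X | ‖φ x‖ ≤ (q : ℝ)})ᶜ := by
    refine (Dense.nonempty ?_).imp fun x hx => hx
    apply dense_iInter_of_isOpen
    · exact fun q => (isClosed_frontier).isOpen_compl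
    · intro q
      exact interior_eq_empty_iff_dense_compl.mp (interior_frontier (hclosed q))
  have hNcont : ContinuousAt (fun y => ‖φ y‖) x₀ := by
    rw [ContinuousAt, tendsto_order]
    constructor
    · exact fun b hb => hlsc x₀ b hb
    · intro r hr
      obtain ⟨q, hq1, hq2⟩ := exists_rat_btwn hr
      have hmem : x₀ ∈ {x : X | ‖φ x‖ ≤ (q : ℝ)} := le_of_lt hq1
      have : x₀ ∈ interior {x : X | ‖φ x‖ ≤ (q : ℝ)} := by
        have hnf := Set.mem_iInter.mp hx₀ q
        rw [(hclosed q).frontier_eq] at hnf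
        simp only [Set.mem_compl_iff, Set.mem_diff, not_and, not_not] at hnf
        exact hnf hmem
      filter_upwards [mem_interior_iff_mem_nhds.mp this] with y hy
      exact lt_of_le_of_lt hy hq2
  -- Step 4: φ is strongly continuous at x₀
  have hφx₀ : ContinuousAt φ x₀ := by
    rw [ContinuousAt, tendsto_iff_norm_sub_tendsto_zero]
    have hsq : Filter.Tendsto (fun y => ‖φ y - φ x₀‖ ^ 2) (nhds x₀) (nhds 0) := by
      have h1 : Filter.Tendsto (fun y => ‖φ y‖ ^ 2 - 2 * (inner ℝ (φ y) (φ x₀) : ℝ)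
          + ‖φ x₀‖ ^ 2) (nhds x₀) (nhds (‖φ x₀‖ ^ 2 - 2 * (inner ℝ (φ x₀) (φ x₀) : ℝ)
          + ‖φ x₀‖ ^ 2)) := by
        exact (((hNcont.pow 2).sub ((hφ_weak (φ x₀)).continuousAt.const_mul 2)).add
          continuousAt_const)
      have h2 : ‖φ x₀‖ ^ 2 - 2 * (inner ℝ (φ x₀) (φ x₀) : ℝ) + ‖φ x₀‖ ^ 2 = 0 := by
        rw [real_inner_self_eq_norm_sq]; ring
      rw [h2] at h1
      refine h1.congr fun y => ?_
      rw [norm_sub_sq_real]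
    have := (Real.continuous_sqrt.tendsto 0).comp hsq
    rw [Real.sqrt_zero] at this
    refine this.congr fun y => ?_
    exact Real.sqrt_sq (norm_nonneg _)
  -- Step 5: propagate continuity everywhere by minimality
  rw [continuous_iff_continuousAt]
  intro x
  rw [ContinuousAt, Metric.tendsto_nhds]
  intro ε hε
  -- strong continuity at x₀ in metric form
  obtain ⟨δ₀, hδ₀, hball⟩ : ∃ δ₀ > 0, ∀ z, dist z x₀ < δ₀ → ‖φ z - φ x₀‖ < ε / 4 := by
    have := Metric.continuousAt_iff.mp hφx₀ (ε / 4) (by linarith)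
    obtain ⟨δ₀, hδ₀, h⟩ := this
    exact ⟨δ₀, hδ₀, fun z hz => by rw [← dist_eq_norm]; exact h hz⟩
  -- find f bringing x near x₀
  obtain ⟨f, hf⟩ : ∃ f : Γ, dist (act f x) x₀ < δ₀ := by
    have := (hmin x).exists_mem_open Metric.isOpen_ball
      ⟨x₀, Metric.mem_ball_self hδ₀⟩
    obtain ⟨z, ⟨f, rfl⟩, hmem⟩ := this
    exact ⟨f, Metric.mem_ball.mp hmem⟩
  -- neighborhood conditions on y near x
  set T : X → H →L[ℝ] H := fun y => (Ψ f y).toLinearIsometry.toContinuousLinearMap with hT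
  have hkey : ∀ᶠ y in nhds x, ‖T y - T x‖ * C + ‖ρ f y - ρ f x‖ < ε / 4 := by
    have hcont : ContinuousAt (fun y => ‖T y - T x‖ * C + ‖ρ f y - ρ f x‖) x :=
      ((((hΨ_cont f).sub continuous_const).norm.mul continuous_const).add
        ((hρ_cont f).sub continuous_const).norm).continuousAt
    have hval : ‖T x - T x‖ * C + ‖ρ f x - ρ f x‖ = 0 := by simp
    exact hcont.eventually_lt continuousAt_const (by rw [hval]; linarith)
  have hnear : ∀ᶠ y in nhds x, dist (act f y) x₀ < δ₀ := by
    have hc : ContinuousAt (fun y => dist (act f y) x₀) x :=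
      ((hact_cont f).dist continuous_const).continuousAt
    exact hc.eventually_lt continuousAt_const hf
  filter_upwards [hkey, hnear] with y h1 h2
  have hiso : ‖φ y - φ x‖ = ‖Ψ f x (φ y) - Ψ f x (φ x)‖ := by
    rw [← map_sub, (Ψ f x).norm_map]
  have h3 : (T y - T x) (φ y) = Ψ f y (φ y) - Ψ f x (φ y) := by
    simp [hT, ContinuousLinearMap.sub_apply]
  have hdecomp : Ψ f x (φ y) - Ψ f x (φ x) =
      (φ (act f y) - φ x₀) - (φ (act f x) - φ x₀) - (T y - T x) (φ y)
        - (ρ f y - ρ f x) := by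
    rw [hφ_inv f y, hφ_inv f x, h3]; abel
  have ha : ‖φ (act f y) - φ x₀‖ < ε / 4 := hball _ h2
  have hb : ‖φ (act f x) - φ x₀‖ < ε / 4 := hball _ hf
  have hcle : ‖(T y - T x) (φ y)‖ ≤ ‖T y - T x‖ * C :=
    le_trans ((T y - T x).le_opNorm _)
      (mul_le_mul_of_nonneg_left (hC y) (norm_nonneg _))
  have tri : ‖(φ (act f y) - φ x₀) - (φ (act f x) - φ x₀) - (T y - T x) (φ y)
      - (ρ f y - ρ f x)‖ ≤ ‖φ (act f y) - φ x₀‖ + ‖φ (act f x) - φ x₀‖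
        + ‖(T y - T x) (φ y)‖ + ‖ρ f y - ρ f x‖ := by
    have t1 := norm_sub_le ((φ (act f y) - φ x₀) - (φ (act f x) - φ x₀)
      - (T y - T x) (φ y)) (ρ f y - ρ f x)
    have t2 := norm_sub_le ((φ (act f y) - φ x₀) - (φ (act f x) - φ x₀))
      ((T y - T x) (φ y))
    have t3 := norm_sub_le (φ (act f y) - φ x₀) (φ (act f x) - φ x₀)
    linarith
  rw [dist_eq_norm, hiso, hdecomp]
  linarith
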